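/- Suppose λ₁ ≤ ρ < (λ₁+λ₂)/2, and let σ, ς, ϱ ≥ 0 and cΘ ∈ [0,1] be constants with ς < σ and ϱ > ρ such that: (i) every nonzero y with f(y) ≤ ρ satisfies |yᵀAy/(yᵀy) − σ| ≤ ς; (ii) every pair of nonzero vectors y, w with wᵀy = 0 and f(y) ≤ ρ satisfies f(w) ≥ ϱ and |wᵀAy| ≤ cΘ·‖w‖_A·‖y‖_A. Then for every unit vector x with f(x) ≤ ρ and every unit vector v with vᵀx = 0, the quantity J₁ − J₂, where J₁ = 2(vᵀAv)·f(x)/(xᵀAx)·(1 − f(x)/f(v)) and J₂ = (8(vᵀMx)/(xᵀMx)²)·vᵀ(Ax − f(x)Mx), satisfies μ_B ≤ J₁ − J₂ ≤ L_B with μ_B = (2ν_min·λ₁/(σ+ς))·(1 − ρ/ϱ) − C_X, L_B = (2ν_max·ρ/(σ−ς))·(1 − λ₁/λₙ) + C_X, and C_X = 8κ_ν·ρ·((ρ−λ₁)/λ₁ + √((ρ−λ₁)/λ₁)·cΘ), where κ_ν = ν_max/ν_min. -/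

import Mathlib

open Matrix Finset

private lemma dot_sum_left {N : ℕ} (w : Fin N → ℝ) (f : Fin N → Fin N → ℝ) :
    (∑ i, f i) ⬝ᵥ w = ∑ i, f i ⬝ᵥ w := by
  simp only [dotProduct, Finset.sum_apply, Finset.sum_mul]
  exact Finset.sum_comm

private lemma dot_sum_right {N : ℕ} (w : Fin N → ℝ) (f : Fin N → Fin N → ℝ) :
    w ⬝ᵥ (∑ i, f i) = ∑ i, w ⬝ᵥ f i := by
  simp only [dotProduct, Finset.sum_apply, Finset.mul_sum]
  exact Finset.sum_comm

private lemma mulVec_sum' {N : ℕ} (M : Matrix (Fin N) (Fin N) ℝ) (f : Fin N → Fin N → ℝ) :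
    M *ᵥ (∑ i, f i) = ∑ i, M *ᵥ f i := by
  rw [← Matrix.mulVecLin_apply, map_sum]
  simp [Matrix.mulVecLin_apply]

private lemma dotsymm {N : ℕ} {A : Matrix (Fin N) (Fin N) ℝ} (hA : A.IsHermitian)
    (w z : Fin N → ℝ) : w ⬝ᵥ A *ᵥ z = z ⬝ᵥ A *ᵥ w := by
  have hAt : Aᵀ = A := by
    rw [← Matrix.conjTranspose_eq_transpose_of_trivial]; exact hA
  rw [Matrix.dotProduct_mulVec, ← Matrix.mulVec_transpose, hAt, dotProduct_comm]

private lemma expand_aux {N : ℕ} (M : Matrix (Fin (N+1)) (Fin (N+1)) ℝ)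
    (u : Fin (N+1) → Fin (N+1) → ℝ)
    (horth : ∀ i j, u i ⬝ᵥ M *ᵥ u j = if i = j then 1 else 0) :
    ∀ z : Fin (N+1) → ℝ, z = ∑ i, (u i ⬝ᵥ M *ᵥ z) • u i := by
  have hsum : ∀ (g : Fin (N+1) → ℝ) (j : Fin (N+1)),
      (∑ i, g i • u i) ⬝ᵥ M *ᵥ u j = g j := by
    intro g j
    rw [dot_sum_left]
    simp [smul_dotProduct, horth, smul_eq_mul]
  have hli : LinearIndependent ℝ u := by
    rw [Fintype.linearIndependent_iff]
    intro g hg j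
    have h := hsum g j
    rw [hg] at h
    simpa using h.symm
  have hcard : Fintype.card (Fin (N+1)) = Module.finrank ℝ (Fin (N+1) → ℝ) := by
    simp
  let b := basisOfLinearIndependentOfCardEqFinrank hli hcard
  have hb : ⇑b = u := coe_basisOfLinearIndependentOfCardEqFinrank hli hcard
  intro z
  have hz : ∑ i, b.repr z i • u i = z := by
    rw [← hb]; exact b.sum_repr z
  have hc : ∀ j, u j ⬝ᵥ M *ᵥ z = b.repr z j := by
    intro j
    conv_lhs => rw [← hz]
    rw [show (∑ i, b.repr z i • u i) = ∑ i, (fun i => b.repr z i • u i) i from rfl,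
      mulVec_sum', dot_sum_right]
    simp only [Matrix.mulVec_smul, dotProduct_smul, smul_eq_mul]
    simp [horth]
  rw [show (∑ i, (u i ⬝ᵥ M *ᵥ z) • u i) = ∑ i, b.repr z i • u i from
    Finset.sum_congr rfl fun i _ => by rw [hc i]]
  exact hz.symm

set_option maxHeartbeats 1000000 in
/-- Two-sided bound on the Hessian quadratic form J₁ − J₂ of the preconditioned
Rayleigh quotient. -/
theorem statement_15 {n : ℕ}
    (A M : Matrix (Fin (n+2)) (Fin (n+2)) ℝ)
    (hA : A.PosDef) (hM : M.PosDef)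
    (lam : Fin (n+2) → ℝ) (u : Fin (n+2) → (Fin (n+2) → ℝ))
    (hlam_pos : 0 < lam 0) (hgap : lam 0 < lam 1) (hmono : Monotone lam)
    (heig : ∀ i, A *ᵥ u i = lam i • (M *ᵥ u i))
    (horth : ∀ i j, u i ⬝ᵥ M *ᵥ u j = if i = j then 1 else 0)
    (hfn : ∀ z : Fin (n+2) → ℝ, z ≠ 0 →
      (z ⬝ᵥ A *ᵥ z) / (z ⬝ᵥ M *ᵥ z) ≤ lam (Fin.last (n+1)))
    (νmin νmax : ℝ) (hνmin : 0 < νmin) (hνmax : 0 < νmax)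
    (hν : ∀ z, νmin * (z ⬝ᵥ z) ≤ z ⬝ᵥ A *ᵥ z ∧ z ⬝ᵥ A *ᵥ z ≤ νmax * (z ⬝ᵥ z))
    (ρ : ℝ) (hρ1 : lam 0 ≤ ρ) (hρ2 : ρ < (lam 0 + lam 1) / 2)
    (σ ς ϱ : ℝ) (hσ : 0 ≤ σ) (hς : 0 ≤ ς) (hϱ : 0 ≤ ϱ)
    (hςσ : ς < σ) (hϱρ : ρ < ϱ)
    (cΘ : ℝ) (hcΘ0 : 0 ≤ cΘ) (hcΘ1 : cΘ ≤ 1)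
    (hσς : ∀ y : Fin (n+2) → ℝ, y ≠ 0 → (y ⬝ᵥ A *ᵥ y) / (y ⬝ᵥ M *ᵥ y) ≤ ρ →
      |(y ⬝ᵥ A *ᵥ y) / (y ⬝ᵥ y) - σ| ≤ ς)
    (horthbd : ∀ y w : Fin (n+2) → ℝ, y ≠ 0 → w ≠ 0 → w ⬝ᵥ y = 0 →
      (y ⬝ᵥ A *ᵥ y) / (y ⬝ᵥ M *ᵥ y) ≤ ρ →
      ϱ ≤ (w ⬝ᵥ A *ᵥ w) / (w ⬝ᵥ M *ᵥ w) ∧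
        |w ⬝ᵥ A *ᵥ y| ≤ cΘ * Real.sqrt (w ⬝ᵥ A *ᵥ w) * Real.sqrt (y ⬝ᵥ A *ᵥ y))
    (x : Fin (n+2) → ℝ) (hxunit : x ⬝ᵥ x = 1)
    (hfx : (x ⬝ᵥ A *ᵥ x) / (x ⬝ᵥ M *ᵥ x) ≤ ρ)
    (v : Fin (n+2) → ℝ) (hvunit : v ⬝ᵥ v = 1) (hvx : v ⬝ᵥ x = 0)
    (J₁ J₂ μB LB CX : ℝ)
    (hJ₁ : J₁ = 2 * (v ⬝ᵥ A *ᵥ v) * ((x ⬝ᵥ A *ᵥ x) / (x ⬝ᵥ M *ᵥ x)) / (x ⬝ᵥ A *ᵥ x) *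
      (1 - ((x ⬝ᵥ A *ᵥ x) / (x ⬝ᵥ M *ᵥ x)) / ((v ⬝ᵥ A *ᵥ v) / (v ⬝ᵥ M *ᵥ v))))
    (hJ₂ : J₂ = 8 * (v ⬝ᵥ M *ᵥ x) / (x ⬝ᵥ M *ᵥ x) ^ 2 *
      (v ⬝ᵥ (A *ᵥ x - ((x ⬝ᵥ A *ᵥ x) / (x ⬝ᵥ M *ᵥ x)) • (M *ᵥ x))))
    (hCX : CX = 8 * (νmax / νmin) * ρ *
      ((ρ - lam 0) / lam 0 + Real.sqrt ((ρ - lam 0) / lam 0) * cΘ))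
    (hμB : μB = 2 * νmin * lam 0 / (σ + ς) * (1 - ρ / ϱ) - CX)
    (hLB : LB = 2 * νmax * ρ / (σ - ς) * (1 - lam 0 / lam (Fin.last (n+1))) + CX) :
    μB ≤ J₁ - J₂ ∧ J₁ - J₂ ≤ LB := by
  have hx0 : x ≠ 0 := by intro h; rw [h] at hxunit; simp at hxunit
  have hv0 : v ≠ 0 := by intro h; rw [h] at hvunit; simp at hvunit
  have hlam : ∀ i, 0 < lam i := fun i => lt_of_lt_of_le hlam_pos (hmono (Fin.zero_le i))
  have hexp := expand_aux M u horth
  -- general bilinear expansions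
  have hMdot : ∀ w z : Fin (n+2) → ℝ,
      w ⬝ᵥ M *ᵥ z = ∑ i, (u i ⬝ᵥ M *ᵥ w) * (u i ⬝ᵥ M *ᵥ z) := by
    intro w z
    conv_lhs => rw [hexp w]
    rw [dot_sum_left]
    simp [smul_dotProduct, smul_eq_mul]
  have hAdot : ∀ w z : Fin (n+2) → ℝ,
      w ⬝ᵥ A *ᵥ z = ∑ i, lam i * ((u i ⬝ᵥ M *ᵥ w) * (u i ⬝ᵥ M *ᵥ z)) := by
    intro w z
    conv_lhs => rw [hexp z]
    rw [mulVec_sum', dot_sum_right]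
    simp only [Matrix.mulVec_smul, heig, dotProduct_smul, smul_eq_mul]
    refine Finset.sum_congr rfl fun i _ => ?_
    rw [dotsymm hM.1 w (u i)]
    ring
  obtain ⟨c, hc⟩ : ∃ c : Fin (n+2) → ℝ, ∀ i, u i ⬝ᵥ M *ᵥ x = c i := ⟨_, fun i => rfl⟩
  obtain ⟨d, hd⟩ : ∃ d : Fin (n+2) → ℝ, ∀ i, u i ⬝ᵥ M *ᵥ v = d i := ⟨_, fun i => rfl⟩
  have hm_s : x ⬝ᵥ M *ᵥ x = ∑ i, c i * c i := by simp only [hMdot x x, hc]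
  have hq_s : x ⬝ᵥ A *ᵥ x = ∑ i, lam i * (c i * c i) := by simp only [hAdot x x, hc]
  have hp_s : v ⬝ᵥ A *ᵥ v = ∑ i, lam i * (d i * d i) := by simp only [hAdot v v, hd]
  have ha_s : v ⬝ᵥ A *ᵥ x = ∑ i, lam i * (d i * c i) := by simp only [hAdot v x, hd, hc]
  have hb_s : v ⬝ᵥ M *ᵥ x = ∑ i, d i * c i := by simp only [hMdot v x, hd, hc]
  -- numeric instantiations (before set)
  have hmpos : 0 < x ⬝ᵥ M *ᵥ x := by simpa using hM.dotProduct_mulVec_pos hx0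
  have hmvpos : 0 < v ⬝ᵥ M *ᵥ v := by simpa using hM.dotProduct_mulVec_pos hv0
  have hq1 : νmin ≤ x ⬝ᵥ A *ᵥ x := by have := (hν x).1; rwa [hxunit, mul_one] at this
  have hq2 : x ⬝ᵥ A *ᵥ x ≤ νmax := by have := (hν x).2; rwa [hxunit, mul_one] at this
  have hp1 : νmin ≤ v ⬝ᵥ A *ᵥ v := by have := (hν v).1; rwa [hvunit, mul_one] at this
  have hp2 : v ⬝ᵥ A *ᵥ v ≤ νmax := by have := (hν v).2; rwa [hvunit, mul_one] at this
  have hσq : |x ⬝ᵥ A *ᵥ x - σ| ≤ ς := by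
    have := hσς x hx0 hfx; rwa [hxunit, div_one] at this
  have hOB := horthbd x v hx0 hv0 hvx hfx
  have hgL : (v ⬝ᵥ A *ᵥ v) / (v ⬝ᵥ M *ᵥ v) ≤ lam (Fin.last (n+1)) := hfn v hv0
  set m := x ⬝ᵥ M *ᵥ x with hm_def
  set q := x ⬝ᵥ A *ᵥ x with hq_def
  set p := v ⬝ᵥ A *ᵥ v with hp_def
  set mv := v ⬝ᵥ M *ᵥ v with hmv_def
  set aa := v ⬝ᵥ A *ᵥ x with haa_def
  set bb := v ⬝ᵥ M *ᵥ x with hbb_def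
  set F := q / m with hF_def
  set G := p / mv with hG_def
  clear_value m q p mv aa bb F G
  have hqpos : 0 < q := lt_of_lt_of_le hνmin hq1
  have hppos : 0 < p := lt_of_lt_of_le hνmin hp1
  have hρpos : 0 < ρ := lt_of_lt_of_le hlam_pos hρ1
  have hϱpos : 0 < ϱ := lt_trans hρpos hϱρ
  have hrl1 : ρ < lam 1 := by linarith
  have hσq1 : σ - ς ≤ q := by have := abs_le.1 hσq; linarith [this.1]
  have hσq2 : q ≤ σ + ς := by have := abs_le.1 hσq; linarith [this.2]
  have hl0m : lam 0 * m ≤ q := by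
    rw [hm_s, hq_s, Finset.mul_sum]
    refine Finset.sum_le_sum fun i _ => ?_
    exact mul_le_mul_of_nonneg_right (hmono (Fin.zero_le i)) (mul_self_nonneg (c i))
  have hFpos : 0 < F := by rw [hF_def]; exact div_pos hqpos hmpos
  have hF0 : lam 0 ≤ F := by rw [hF_def]; exact (le_div_iff₀ hmpos).2 hl0m
  have hFρ : F ≤ ρ := hfx
  have hGpos : 0 < G := by rw [hG_def]; exact div_pos hppos hmvpos
  have hϱG : ϱ ≤ G := hOB.1
  have hGlam : G ≤ lam (Fin.last (n+1)) := hgL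
  have hlamL : 0 < lam (Fin.last (n+1)) := hlam _
  have hqFm : F * m = q := by rw [hF_def]; exact div_mul_cancel₀ q hmpos.ne'
  -- ==== J₁ bounds ====
  have htlo : 1 - ρ / ϱ ≤ 1 - F / G := by
    have : F / G ≤ ρ / ϱ := div_le_div₀ hρpos.le hFρ hϱpos hϱG
    linarith
  have hthi : 1 - F / G ≤ 1 - lam 0 / lam (Fin.last (n+1)) := by
    have : lam 0 / lam (Fin.last (n+1)) ≤ F / G := div_le_div₀ hFpos.le hF0 hGpos hGlam
    linarith
  have htlo0 : (0:ℝ) ≤ 1 - ρ / ϱ := by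
    have : ρ / ϱ ≤ 1 := (div_le_one hϱpos).2 hϱρ.le
    linarith
  have hPlo : 2 * νmin * lam 0 / (σ + ς) ≤ 2 * p * F / q := by
    have h1 : νmin * lam 0 ≤ p * F := mul_le_mul hp1 hF0 hlam_pos.le (le_trans hνmin.le hp1)
    exact div_le_div₀ (le_of_lt (mul_pos (mul_pos two_pos hppos) hFpos)) (by linarith) hqpos hσq2
  have hPhi : 2 * p * F / q ≤ 2 * νmax * ρ / (σ - ς) := by
    have h1 : p * F ≤ νmax * ρ := mul_le_mul hp2 hFρ hFpos.le hνmax.le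
    exact div_le_div₀ (le_of_lt (mul_pos (mul_pos two_pos hνmax) hρpos)) (by linarith) (by linarith) hσq1
  have hPlo0 : (0:ℝ) ≤ 2 * p * F / q := le_of_lt (div_pos (mul_pos (mul_pos two_pos hppos) hFpos) hqpos)
  have hJ1low : 2 * νmin * lam 0 / (σ + ς) * (1 - ρ / ϱ) ≤ J₁ := by
    rw [hJ₁]
    exact mul_le_mul hPlo htlo htlo0 hPlo0
  have hJ1high : J₁ ≤ 2 * νmax * ρ / (σ - ς) * (1 - lam 0 / lam (Fin.last (n+1))) := by
    rw [hJ₁]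
    exact mul_le_mul hPhi hthi (by linarith) (le_of_lt (div_pos (mul_pos (mul_pos two_pos hνmax) hρpos) (by linarith)))
  -- ==== J₂ bound ====
  have hs_dot : v ⬝ᵥ (A *ᵥ x - F • (M *ᵥ x)) = aa - F * bb := by
    rw [dotProduct_sub, dotProduct_smul, smul_eq_mul, ← haa_def, ← hbb_def]
  have hJ₂' : J₂ = 8 * bb / m ^ 2 * (aa - F * bb) := by rw [hJ₂, hs_dot]
  have hs_sum : aa - F * bb = ∑ i, (lam i - F) * (d i * c i) := by
    rw [ha_s, hb_s, Finset.mul_sum, ← Finset.sum_sub_distrib]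
    exact Finset.sum_congr rfl fun i _ => by ring
  have hprod : ∀ i : Fin (n+2),
      ((lam i - F) * c i / Real.sqrt (lam i)) * (Real.sqrt (lam i) * d i)
        = (lam i - F) * (d i * c i) := by
    intro i
    have h0 : Real.sqrt (lam i) ≠ 0 := ne_of_gt (Real.sqrt_pos.2 (hlam i))
    field_simp
  have hCS : (aa - F * bb) ^ 2 ≤
      (∑ i, ((lam i - F) * c i / Real.sqrt (lam i)) ^ 2) *
        ∑ i, (Real.sqrt (lam i) * d i) ^ 2 := by
    rw [hs_sum]
    calc (∑ i, (lam i - F) * (d i * c i)) ^ 2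
        = (∑ i, ((lam i - F) * c i / Real.sqrt (lam i)) * (Real.sqrt (lam i) * d i)) ^ 2 := by
          rw [Finset.sum_congr rfl fun i _ => (hprod i).symm]
      _ ≤ _ := Finset.sum_mul_sq_le_sq_mul_sq _ _ _
  have hsum2 : ∑ i, (Real.sqrt (lam i) * d i) ^ 2 = p := by
    rw [hp_s]
    refine Finset.sum_congr rfl fun i _ => ?_
    rw [mul_pow, Real.sq_sqrt (hlam i).le]
    ring
  have hsum1 : ∑ i, ((lam i - F) * c i / Real.sqrt (lam i)) ^ 2
      ≤ (F - lam 0) * F * m / lam 0 := by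
    have hstep : ∀ i : Fin (n+2), ((lam i - F) * c i / Real.sqrt (lam i)) ^ 2
        ≤ (F - lam 0) ^ 2 * (c i * c i) / lam 0 + (lam i - lam 0) * (c i * c i) := by
      intro i
      have hsq : ((lam i - F) * c i / Real.sqrt (lam i)) ^ 2
          = (lam i - F) ^ 2 * (c i * c i) / lam i := by
        rw [div_pow, mul_pow, Real.sq_sqrt (hlam i).le, pow_two (c i)]
      rw [hsq]
      rcases eq_or_ne i 0 with h0 | h0
      · rw [h0]
        have : (lam 0 - F) ^ 2 = (F - lam 0) ^ 2 := by ring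
        rw [this]
        have hnn : 0 ≤ (lam 0 - lam 0) * (c 0 * c 0) := by
          rw [sub_self, zero_mul]
        linarith
      · have hvpos : 0 < i.val := Nat.pos_of_ne_zero (fun h => h0 (Fin.ext h))
        have h1le : (1 : Fin (n+2)) ≤ i := by
          rw [Fin.le_def, Fin.val_one]; omega
        have h1i : lam 1 ≤ lam i := hmono h1le
        have key : (lam i - F) ^ 2 ≤ (lam i - lam 0) * lam i := by
          rw [pow_two]
          exact mul_le_mul (by linarith) (by linarith) (by linarith) (by linarith)
        have hmain : (lam i - F) ^ 2 * (c i * c i) / lam i ≤ (lam i - lam 0) * (c i * c i) := by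
          rw [div_le_iff₀ (hlam i)]
          calc (lam i - F) ^ 2 * (c i * c i)
              ≤ ((lam i - lam 0) * lam i) * (c i * c i) :=
                mul_le_mul_of_nonneg_right key (mul_self_nonneg _)
            _ = (lam i - lam 0) * (c i * c i) * lam i := by ring
        have hnn : 0 ≤ (F - lam 0) ^ 2 * (c i * c i) / lam 0 :=
          div_nonneg (mul_nonneg (sq_nonneg _) (mul_self_nonneg _)) hlam_pos.le
        linarith
    calc ∑ i, ((lam i - F) * c i / Real.sqrt (lam i)) ^ 2
        ≤ ∑ i, ((F - lam 0) ^ 2 * (c i * c i) / lam 0 + (lam i - lam 0) * (c i * c i)) :=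
          Finset.sum_le_sum fun i _ => hstep i
      _ = (F - lam 0) ^ 2 * m / lam 0 + (q - lam 0 * m) := by
          have e1 : ∑ i, (F - lam 0) ^ 2 * (c i * c i) / lam 0 = (F - lam 0) ^ 2 * m / lam 0 := by
            rw [hm_s, Finset.mul_sum, Finset.sum_div]
          have e2 : ∑ i, (lam i - lam 0) * (c i * c i) = q - lam 0 * m := by
            rw [hq_s, hm_s, Finset.mul_sum, ← Finset.sum_sub_distrib]
            exact Finset.sum_congr rfl fun i _ => by ring
          rw [Finset.sum_add_distrib, e1, e2]
      _ = (F - lam 0) * F * m / lam 0 := by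
          rw [← hqFm]
          field_simp
          ring
  -- combine Cauchy-Schwarz pieces
  have hs2 : (aa - F * bb) ^ 2 ≤ νmax * ((ρ - lam 0) / lam 0) * q := by
    have hstep1 : (aa - F * bb) ^ 2 ≤ ((F - lam 0) * F * m / lam 0) * p := by
      calc (aa - F * bb) ^ 2
          ≤ (∑ i, ((lam i - F) * c i / Real.sqrt (lam i)) ^ 2) *
              ∑ i, (Real.sqrt (lam i) * d i) ^ 2 := hCS
        _ = (∑ i, ((lam i - F) * c i / Real.sqrt (lam i)) ^ 2) * p := by rw [hsum2]
        _ ≤ ((F - lam 0) * F * m / lam 0) * p := mul_le_mul_of_nonneg_right hsum1 hppos.le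
    have h1 : (F - lam 0) * F * m ≤ (ρ - lam 0) * q := by
      rw [mul_assoc, hqFm]
      exact mul_le_mul_of_nonneg_right (by linarith) hqpos.le
    have h2 : (F - lam 0) * F * m / lam 0 ≤ (ρ - lam 0) * q / lam 0 :=
      div_le_div₀ (mul_nonneg (by linarith) hqpos.le) h1 hlam_pos le_rfl
    have hstep2 : ((F - lam 0) * F * m / lam 0) * p ≤ ((ρ - lam 0) * q / lam 0) * νmax := by
      refine mul_le_mul h2 hp2 (by linarith) ?_
      exact div_nonneg (mul_nonneg (by linarith) hqpos.le) hlam_pos.le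
    calc (aa - F * bb) ^ 2 ≤ ((F - lam 0) * F * m / lam 0) * p := hstep1
      _ ≤ ((ρ - lam 0) * q / lam 0) * νmax := hstep2
      _ = νmax * ((ρ - lam 0) / lam 0) * q := by ring
  have hK0 : 0 ≤ (ρ - lam 0) / lam 0 := div_nonneg (by linarith) hlam_pos.le
  have hsabs : |aa - F * bb| ≤
      Real.sqrt νmax * Real.sqrt ((ρ - lam 0) / lam 0) * Real.sqrt q := by
    have h1 : |aa - F * bb| = Real.sqrt ((aa - F * bb) ^ 2) := (Real.sqrt_sq_eq_abs _).symm
    have h2 : Real.sqrt νmax * Real.sqrt ((ρ - lam 0) / lam 0) * Real.sqrt q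
        = Real.sqrt (νmax * ((ρ - lam 0) / lam 0) * q) := by
      rw [← Real.sqrt_mul hνmax.le, ← Real.sqrt_mul (mul_nonneg hνmax.le hK0)]
    rw [h1, h2]
    exact Real.sqrt_le_sqrt hs2
  have haabs : |aa| ≤ cΘ * (Real.sqrt νmax * Real.sqrt q) := by
    have h2 : Real.sqrt p ≤ Real.sqrt νmax := Real.sqrt_le_sqrt hp2
    calc |aa| ≤ cΘ * Real.sqrt p * Real.sqrt q := hOB.2
      _ ≤ cΘ * Real.sqrt νmax * Real.sqrt q :=
          mul_le_mul_of_nonneg_right (mul_le_mul_of_nonneg_left h2 hcΘ0) (Real.sqrt_nonneg q)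
      _ = cΘ * (Real.sqrt νmax * Real.sqrt q) := by ring
  have hbbabs : |bb| * F ≤ |aa| + |aa - F * bb| := by
    have h1 : |bb| * F = |F * bb| := by
      rw [abs_mul, abs_of_pos hFpos]; ring
    rw [h1]
    calc |F * bb| = |aa + -(aa - F * bb)| := by congr 1; ring
      _ ≤ |aa| + |-(aa - F * bb)| := abs_add_le _ _
      _ = |aa| + |aa - F * bb| := by rw [abs_neg]
  set SA := cΘ * (Real.sqrt νmax * Real.sqrt q) with hSA_def
  set SS := Real.sqrt νmax * Real.sqrt ((ρ - lam 0) / lam 0) * Real.sqrt q with hSS_def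
  have hSA0 : 0 ≤ SA := by
    rw [hSA_def]
    exact mul_nonneg hcΘ0 (mul_nonneg (Real.sqrt_nonneg _) (Real.sqrt_nonneg _))
  have hSS0 : 0 ≤ SS := by
    rw [hSS_def]
    exact mul_nonneg (mul_nonneg (Real.sqrt_nonneg _) (Real.sqrt_nonneg _)) (Real.sqrt_nonneg _)
  have habs_s0 : 0 ≤ |aa - F * bb| := abs_nonneg _
  have hJ2abs : |J₂| ≤ 8 * ((SA + SS) * SS) / (F * m ^ 2) := by
    have e0 : |J₂| = 8 * (|bb| * |aa - F * bb|) / m ^ 2 := by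
      rw [hJ₂', abs_mul, abs_div, abs_mul,
        abs_of_nonneg (by norm_num : (0:ℝ) ≤ (8:ℝ)), abs_of_pos (pow_pos hmpos 2)]
      ring
    rw [e0, div_le_div_iff₀ (pow_pos hmpos 2) (mul_pos hFpos (pow_pos hmpos 2))]
    have h1 : |bb| * |aa - F * bb| * F ≤ (SA + SS) * SS := by
      calc |bb| * |aa - F * bb| * F = (|bb| * F) * |aa - F * bb| := by ring
        _ ≤ (|aa| + |aa - F * bb|) * |aa - F * bb| :=
            mul_le_mul_of_nonneg_right hbbabs habs_s0
        _ ≤ (SA + SS) * SS :=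
            mul_le_mul (add_le_add haabs hsabs) hsabs habs_s0 (by linarith)
    calc 8 * (|bb| * |aa - F * bb|) * (F * m ^ 2)
        = (|bb| * |aa - F * bb| * F) * (8 * m ^ 2) := by ring
      _ ≤ ((SA + SS) * SS) * (8 * m ^ 2) := by
          refine mul_le_mul_of_nonneg_right h1 ?_
          have := pow_pos hmpos 2
          linarith
      _ = 8 * ((SA + SS) * SS) * m ^ 2 := by ring
  have hval : 8 * ((SA + SS) * SS) / (F * m ^ 2) ≤ CX := by
    have eSS : SS * SS = νmax * ((ρ - lam 0) / lam 0) * q := by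
      rw [hSS_def]
      rw [show (Real.sqrt νmax * Real.sqrt ((ρ - lam 0) / lam 0) * Real.sqrt q) *
            (Real.sqrt νmax * Real.sqrt ((ρ - lam 0) / lam 0) * Real.sqrt q)
          = (Real.sqrt νmax * Real.sqrt νmax) *
            ((Real.sqrt ((ρ - lam 0) / lam 0) * Real.sqrt ((ρ - lam 0) / lam 0)) *
              (Real.sqrt q * Real.sqrt q)) from by ring]
      rw [Real.mul_self_sqrt hνmax.le, Real.mul_self_sqrt hK0, Real.mul_self_sqrt hqpos.le]
      ring
    have eSA : SA * SS = cΘ * Real.sqrt ((ρ - lam 0) / lam 0) * (νmax * q) := by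
      rw [hSA_def, hSS_def]
      rw [show cΘ * (Real.sqrt νmax * Real.sqrt q) *
            (Real.sqrt νmax * Real.sqrt ((ρ - lam 0) / lam 0) * Real.sqrt q)
          = cΘ * Real.sqrt ((ρ - lam 0) / lam 0) *
            ((Real.sqrt νmax * Real.sqrt νmax) * (Real.sqrt q * Real.sqrt q)) from by ring]
      rw [Real.mul_self_sqrt hνmax.le, Real.mul_self_sqrt hqpos.le]
    have enum : (SA + SS) * SS = νmax * q *
        ((ρ - lam 0) / lam 0 + Real.sqrt ((ρ - lam 0) / lam 0) * cΘ) := by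
      rw [add_mul, eSA, eSS]; ring
    have eden : F * m ^ 2 = q * m := by rw [pow_two, ← mul_assoc, hqFm]
    rw [enum, eden]
    have eq1 : 8 * (νmax * q * ((ρ - lam 0) / lam 0 + Real.sqrt ((ρ - lam 0) / lam 0) * cΘ)) /
        (q * m) = 8 * νmax * ((ρ - lam 0) / lam 0 + Real.sqrt ((ρ - lam 0) / lam 0) * cΘ) / m := by
      rw [div_eq_div_iff (mul_pos hqpos hmpos).ne' hmpos.ne']
      ring
    rw [eq1, hCX]
    have hN0 : 0 ≤ (ρ - lam 0) / lam 0 + Real.sqrt ((ρ - lam 0) / lam 0) * cΘ :=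
      add_nonneg hK0 (mul_nonneg (Real.sqrt_nonneg _) hcΘ0)
    have hρm : νmin ≤ ρ * m := by
      have h := mul_le_mul_of_nonneg_right hFρ hmpos.le
      rw [hqFm] at h
      linarith
    rw [div_le_iff₀ hmpos]
    rw [show 8 * (νmax / νmin) * ρ *
          ((ρ - lam 0) / lam 0 + Real.sqrt ((ρ - lam 0) / lam 0) * cΘ) * m
        = 8 * νmax * ((ρ - lam 0) / lam 0 + Real.sqrt ((ρ - lam 0) / lam 0) * cΘ) *
          ((ρ * m) / νmin) from by field_simp]
    have hge1 : 1 ≤ (ρ * m) / νmin := (one_le_div hνmin).2 hρm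
    exact le_mul_of_one_le_right
      (mul_nonneg (mul_nonneg (by norm_num) hνmax.le) hN0) hge1
  have hJ2CX : |J₂| ≤ CX := hJ2abs.trans hval
  have hfin := abs_le.1 hJ2CX
  constructor
  · rw [hμB]; linarith [hJ1low, hfin.2]
  · rw [hLB]; linarith [hJ1high, hfin.1]
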